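/- Let T > 0, let (Ω, F, (F_t)_{t∈[0,T]}, P) be a filtered probability space whose filtration satisfies the usual conditions, and let Y = (Y(t))_{t∈[0,T]} be a progressively measurable process with continuous, strictly positive sample paths. Let x_0 > 0 and let c and c̃ be two strictly positive martingales with continuous sample paths such that ∫_0^T c(t)/Y(t) dt = x_0 and ∫_0^T c̃(t)/Y(t) dt = x_0 almost surely, and such that ∫_0^T (c(t)+c̃(t))/Y(t) dt < ∞ almost surely. Then c and c̃ are indistinguishable, i.e., P(c(t) = c̃(t) for all t ∈ [0,T]) = 1. -/

import Mathlib

open MeasureTheory Set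

lemma eqOn_Icc_of_ae_eq {T : ℝ} (hT : 0 < T) {f g : ℝ → ℝ}
    (hf : ContinuousOn f (Icc 0 T)) (hg : ContinuousOn g (Icc 0 T))
    (h : ∀ᵐ t ∂(volume.restrict (Icc (0:ℝ) T)), f t = g t) :
    ∀ t ∈ Icc (0:ℝ) T, f t = g t := by
  intro t ht
  by_contra hne
  have hcw : ContinuousWithinAt (fun s => f s - g s) (Icc 0 T) t := (hf t ht).sub (hg t ht)
  have hne' : f t - g t ≠ 0 := sub_ne_zero.2 hne
  have hev : ∀ᶠ s in nhdsWithin t (Icc 0 T), f s - g s ≠ 0 := hcw.eventually_ne hne'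
  obtain ⟨δ, hδ, hball⟩ := Metric.mem_nhdsWithin_iff.1 hev
  set a := max 0 (t - δ/2) with ha
  set b := min T (t + δ/2) with hb
  have hab : a < b := by
    apply max_lt (lt_min hT (by linarith [ht.1])) (lt_min (by linarith [ht.2]) (by linarith))
  have hsub : Icc a b ⊆ {s | ¬ f s = g s} ∩ Icc 0 T := by
    intro s hs
    have h1 : t - δ/2 ≤ s := le_trans (le_max_right _ _) hs.1
    have h2 : s ≤ t + δ/2 := le_trans hs.2 (min_le_right _ _)
    have hs1 : s ∈ Icc (0:ℝ) T := ⟨le_trans (le_max_left _ _) hs.1, le_trans hs.2 (min_le_left _ _)⟩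
    have hd : s ∈ Metric.ball t δ := by
      rw [Metric.mem_ball, Real.dist_eq, abs_sub_lt_iff]
      constructor <;> linarith
    exact ⟨fun hfg => (hball ⟨hd, hs1⟩) (sub_eq_zero.2 hfg), hs1⟩
  have h0 : volume ({s | ¬ f s = g s} ∩ Icc (0:ℝ) T) = 0 := by
    rw [ae_iff] at h
    rwa [Measure.restrict_apply' measurableSet_Icc] at h
  have hzero : volume (Icc a b) = 0 := measure_mono_null hsub h0
  rw [Real.volume_Icc] at hzero
  exact absurd hzero (by simp only [ne_eq, ENNReal.ofReal_eq_zero, not_le]; linarith)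

lemma tower_aux {Ω : Type*} {m0 : MeasurableSpace Ω} {μ : Measure Ω} [IsProbabilityMeasure μ]
    {m : MeasurableSpace Ω} (hm : m ≤ m0) {f h g : Ω → ℝ}
    (hfint : Integrable f μ) (hf0 : 0 ≤ᵐ[μ] f)
    (hcond : μ[f|m] =ᵐ[μ] h) (hhm : AEMeasurable h μ) (hh0 : 0 ≤ᵐ[μ] h)
    (hgm : StronglyMeasurable[m] g) (hg0 : ∀ ω, 0 ≤ g ω) :
    ∫⁻ ω, ENNReal.ofReal (g ω * f ω) ∂μ = ∫⁻ ω, ENNReal.ofReal (g ω * h ω) ∂μ := by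
  have hgm0 : Measurable[m0] g := hgm.measurable.mono hm le_rfl
  have hhint : Integrable h μ := integrable_condExp.congr hcond
  set gn : ℕ → Ω → ℝ := fun n ω => min (g ω) n with hgn
  have hgn_nonneg : ∀ n ω, 0 ≤ gn n ω := fun n ω => le_min (hg0 ω) n.cast_nonneg
  have hgn_bound : ∀ n : ℕ, ∀ᵐ ω ∂μ, ‖gn n ω‖ ≤ (n:ℝ) := fun n => ae_of_all _ fun ω => by
    rw [Real.norm_eq_abs, abs_of_nonneg (hgn_nonneg n ω)]; exact min_le_right _ _
  have hgnm : ∀ n : ℕ, StronglyMeasurable[m] (gn n) := fun n =>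
    (hgm.measurable.min (@measurable_const ℝ Ω _ m _)).stronglyMeasurable
  have key : ∀ n : ℕ, ∫ ω, gn n ω * f ω ∂μ = ∫ ω, gn n ω * h ω ∂μ := by
    intro n
    have h1 : μ[(fun ω => gn n ω * f ω)|m] =ᵐ[μ] fun ω => gn n ω * (μ[f|m]) ω :=
      condExp_stronglyMeasurable_mul_of_bound hm (hgnm n) hfint n (hgn_bound n)
    calc ∫ ω, gn n ω * f ω ∂μ = ∫ ω, (μ[(fun ω => gn n ω * f ω)|m]) ω ∂μ :=
          (integral_condExp hm).symm
      _ = ∫ ω, gn n ω * (μ[f|m]) ω ∂μ := integral_congr_ae h1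
      _ = ∫ ω, gn n ω * h ω ∂μ :=
          integral_congr_ae (by filter_upwards [hcond] with ω hω; rw [hω])
  have main : ∀ x : Ω → ℝ, AEMeasurable x μ → 0 ≤ᵐ[μ] x →
      (∀ n : ℕ, Integrable (fun ω => gn n ω * x ω) μ) →
      ∫⁻ ω, ENNReal.ofReal (g ω * x ω) ∂μ = ⨆ n : ℕ, ENNReal.ofReal (∫ ω, gn n ω * x ω ∂μ) := by
    intro x hxm hx0 hxint
    have hptwise : ∀ᵐ ω ∂μ,
        ENNReal.ofReal (g ω * x ω) = ⨆ n : ℕ, ENNReal.ofReal (gn n ω * x ω) := by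
      filter_upwards [hx0] with ω hx0ω
      have hx0ω' : (0:ℝ) ≤ x ω := hx0ω
      refine le_antisymm ?_ (iSup_le fun n =>
        ENNReal.ofReal_le_ofReal (mul_le_mul_of_nonneg_right (min_le_left _ _) hx0ω'))
      refine le_iSup_of_le ⌈g ω⌉₊ (le_of_eq ?_)
      have h5 : gn ⌈g ω⌉₊ ω = g ω := min_eq_left (Nat.le_ceil _)
      rw [h5]
    calc ∫⁻ ω, ENNReal.ofReal (g ω * x ω) ∂μ
        = ∫⁻ ω, ⨆ n : ℕ, ENNReal.ofReal (gn n ω * x ω) ∂μ := lintegral_congr_ae hptwise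
      _ = ⨆ n : ℕ, ∫⁻ ω, ENNReal.ofReal (gn n ω * x ω) ∂μ := by
          refine lintegral_iSup' (fun n => ENNReal.measurable_ofReal.comp_aemeasurable
            (((hgm0.min (@measurable_const ℝ Ω _ m0 _)).aemeasurable).mul hxm)) ?_
          filter_upwards [hx0] with ω hx0ω
          intro n k hnk
          have hx0ω' : (0:ℝ) ≤ x ω := hx0ω
          exact ENNReal.ofReal_le_ofReal (mul_le_mul_of_nonneg_right
            (min_le_min le_rfl (Nat.cast_le.2 hnk)) hx0ω')
      _ = ⨆ n : ℕ, ENNReal.ofReal (∫ ω, gn n ω * x ω ∂μ) :=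
          iSup_congr fun n => (ofReal_integral_eq_lintegral_ofReal (hxint n)
            (by filter_upwards [hx0] with ω hω using mul_nonneg (hgn_nonneg n ω) hω)).symm
  rw [main f hfint.aemeasurable hf0 (fun n => hfint.bdd_mul
      ((hgnm n).mono hm).aestronglyMeasurable (hgn_bound n)),
    main h hhm hh0 (fun n => hhint.bdd_mul
      ((hgnm n).mono hm).aestronglyMeasurable (hgn_bound n))]
  exact iSup_congr fun n => by rw [key n]


/-- Uniqueness of a martingale consumption strategy: if `c` and `c'` are strictly positive
continuous martingales on `[0,T]` exhausting the initial wealth `x₀` under the strictly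
positive continuous growth process `Y`, i.e., `∫_0^T c(t)/Y(t) dt = x₀ = ∫_0^T c'(t)/Y(t) dt`
a.s., then `c` and `c'` are indistinguishable. -/
theorem martingale_consumption_unique
    {Ω : Type*} {m0 : MeasurableSpace Ω} {μ : Measure Ω} [IsProbabilityMeasure μ]
    (T : ℝ) (hT : 0 < T)
    (ℱ : Filtration ℝ m0)
    -- usual conditions: right-continuity and completeness of the filtration
    (h_right : ∀ t : ℝ, ℱ t = ⨅ u : {u : ℝ // t < u}, ℱ (u : ℝ))
    (h_complete : ∀ s : Set Ω, μ s = 0 → MeasurableSet[ℱ 0] s)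
    (Y : ℝ → Ω → ℝ)
    -- Y is progressively measurable with continuous, strictly positive sample paths
    (hY_prog : ProgMeasurable ℱ Y)
    (hY_cont : ∀ ω, ContinuousOn (fun t => Y t ω) (Icc 0 T))
    (hY_pos : ∀ ω, ∀ t ∈ Icc (0 : ℝ) T, 0 < Y t ω)
    (x₀ : ℝ) (hx₀ : 0 < x₀)
    (c c' : ℝ → Ω → ℝ)
    -- c and c' are strictly positive martingales on [0,T] with continuous sample paths
    (hc_adapted : Adapted ℱ c) (hc'_adapted : Adapted ℱ c')
    (hc_int : ∀ t ∈ Icc (0 : ℝ) T, Integrable (c t) μ)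
    (hc'_int : ∀ t ∈ Icc (0 : ℝ) T, Integrable (c' t) μ)
    (hc_mart : ∀ s t : ℝ, 0 ≤ s → s ≤ t → t ≤ T → μ[c t | ℱ s] =ᵐ[μ] c s)
    (hc'_mart : ∀ s t : ℝ, 0 ≤ s → s ≤ t → t ≤ T → μ[c' t | ℱ s] =ᵐ[μ] c' s)
    (hc_cont : ∀ ω, ContinuousOn (fun t => c t ω) (Icc 0 T))
    (hc'_cont : ∀ ω, ContinuousOn (fun t => c' t ω) (Icc 0 T))
    (hc_pos : ∀ ω, ∀ t ∈ Icc (0 : ℝ) T, 0 < c t ω)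
    (hc'_pos : ∀ ω, ∀ t ∈ Icc (0 : ℝ) T, 0 < c' t ω)
    -- integrability of (c + c')/Y on [0,T], a.s.
    (h_int : ∀ᵐ ω ∂μ, IntegrableOn (fun t => (c t ω + c' t ω) / Y t ω) (Icc 0 T))
    -- both strategies exhaust the initial wealth x₀, a.s.
    (hc_budget : ∀ᵐ ω ∂μ, ∫ t in (0 : ℝ)..T, c t ω / Y t ω = x₀)
    (hc'_budget : ∀ᵐ ω ∂μ, ∫ t in (0 : ℝ)..T, c' t ω / Y t ω = x₀) :
    ∀ᵐ ω ∂μ, ∀ t ∈ Icc (0 : ℝ) T, c t ω = c' t ω := by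
  have hT0T : T ∈ Icc (0:ℝ) T := ⟨hT.le, le_rfl⟩
  set ν : Measure ℝ := volume.restrict (Icc 0 T) with hν
  -- clamping map
  set π₀ : ℝ → ℝ := fun t => max 0 (min t T) with hπ₀def
  have hπ₀mem : ∀ t, π₀ t ∈ Icc (0:ℝ) T :=
    fun t => ⟨le_max_left _ _, max_le hT.le (min_le_right _ _)⟩
  have hπ₀id : ∀ t ∈ Icc (0:ℝ) T, π₀ t = t := fun t ht => by
    simp only [hπ₀def]; rw [min_eq_left ht.2, max_eq_right ht.1]
  have hπ₀cont : Continuous π₀ := continuous_const.max (continuous_id.min continuous_const)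
  have hjoint : ∀ b : ℝ → Ω → ℝ, Adapted ℱ b → (∀ ω, ContinuousOn (fun t => b t ω) (Icc 0 T)) →
      Measurable (fun p : ℝ × Ω => b (π₀ p.1) p.2) := by
    intro b hba hbc
    exact measurable_uncurry_of_continuous_of_measurable
      (fun ω => (hbc ω).comp_continuous hπ₀cont hπ₀mem)
      (fun t => (hba (π₀ t)).mono (ℱ.le _) le_rfl)
  have hYadapted : Adapted ℱ Y := fun t => (IsStronglyProgressive.stronglyAdapted hY_prog t).measurable
  have hjc := hjoint c hc_adapted hc_cont
  have hjc' := hjoint c' hc'_adapted hc'_cont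
  have hjY := hjoint Y hYadapted hY_cont
  have haeIcc : ∀ᵐ p ∂(ν.prod μ), p.1 ∈ Icc (0:ℝ) T := by
    rw [ae_iff]
    have hset : {a : ℝ × Ω | a.1 ∉ Icc (0:ℝ) T} ⊆ ((Icc (0:ℝ) T)ᶜ) ×ˢ (univ : Set Ω) :=
      fun p hp => ⟨hp, mem_univ _⟩
    refine measure_mono_null hset ?_
    rw [Measure.prod_prod, hν, Measure.restrict_apply measurableSet_Icc.compl]
    simp
  have haemeas : ∀ F : ℝ → Ω → ℝ, Measurable (fun p : ℝ × Ω => F (π₀ p.1) p.2) →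
      AEMeasurable (fun p : ℝ × Ω => ENNReal.ofReal (F p.1 p.2)) (ν.prod μ) := by
    intro F hF
    refine (ENNReal.measurable_ofReal.comp hF).aemeasurable.congr ?_
    filter_upwards [haeIcc] with p hp
    simp only [Function.comp_apply]
    rw [hπ₀id _ hp]
  -- budget in lintegral form
  have hbudget : ∀ b : ℝ → Ω → ℝ, (∀ ω, ContinuousOn (fun t => b t ω) (Icc 0 T)) →
      (∀ ω, ∀ t ∈ Icc (0:ℝ) T, 0 < b t ω) →
      (∀ᵐ ω ∂μ, ∫ t in (0:ℝ)..T, b t ω / Y t ω = x₀) →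
      (∀ ω, ∀ t ∈ Icc (0:ℝ) T, b t ω ≤ c t ω + c' t ω) →
      ∀ᵐ ω ∂μ, ∫⁻ t, ENNReal.ofReal (b t ω / Y t ω) ∂ν = ENNReal.ofReal x₀ := by
    intro b hbc hbp hbud hble
    filter_upwards [hbud, h_int] with ω h1 h2
    have hYne : ∀ t ∈ Icc (0:ℝ) T, Y t ω ≠ 0 := fun t ht => (hY_pos ω t ht).ne'
    have hcont : ContinuousOn (fun t => b t ω / Y t ω) (Icc 0 T) := (hbc ω).div (hY_cont ω) hYne
    have hnn : 0 ≤ᵐ[ν] fun t => b t ω / Y t ω := by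
      rw [hν]
      filter_upwards [ae_restrict_mem measurableSet_Icc] with t ht
      exact (div_pos (hbp ω t ht) (hY_pos ω t ht)).le
    have hint : IntegrableOn (fun t => b t ω / Y t ω) (Icc 0 T) volume := by
      refine Integrable.mono' h2 (hcont.aestronglyMeasurable measurableSet_Icc) ?_
      rw [ae_restrict_iff' measurableSet_Icc]
      refine ae_of_all _ fun t ht => ?_
      rw [Real.norm_eq_abs, abs_of_nonneg (div_pos (hbp ω t ht) (hY_pos ω t ht)).le]
      exact (div_le_div_iff_of_pos_right (hY_pos ω t ht)).2 (hble ω t ht)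
    have heq : ENNReal.ofReal (∫ t, b t ω / Y t ω ∂ν) = ∫⁻ t, ENNReal.ofReal (b t ω / Y t ω) ∂ν :=
      ofReal_integral_eq_lintegral_ofReal hint hnn
    rw [← heq]
    congr 1
    rw [hν]
    rw [MeasureTheory.integral_Icc_eq_integral_Ioc, ← intervalIntegral.integral_of_le hT.le]
    exact h1
  -- the key identity
  have key : ∀ a b : ℝ → Ω → ℝ,
      Adapted ℱ a →
      (∀ ω, ∀ t ∈ Icc (0:ℝ) T, 0 < a t ω) →
      Integrable (a T) μ →
      (∀ t, t ∈ Icc (0:ℝ) T → μ[a T|ℱ t] =ᵐ[μ] a t) →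
      Adapted ℱ b →
      (∀ ω, ∀ t ∈ Icc (0:ℝ) T, 0 < b t ω) →
      (∀ᵐ ω ∂μ, ∫⁻ t, ENNReal.ofReal (b t ω / Y t ω) ∂ν = ENNReal.ofReal x₀) →
      AEMeasurable (fun p : ℝ × Ω => ENNReal.ofReal (b p.1 p.2 / Y p.1 p.2 * a p.1 p.2)) (ν.prod μ) →
      AEMeasurable (fun p : ℝ × Ω => ENNReal.ofReal (b p.1 p.2 / Y p.1 p.2 * a T p.2)) (ν.prod μ) →
      ∫⁻ p, ENNReal.ofReal (b p.1 p.2 / Y p.1 p.2 * a p.1 p.2) ∂(ν.prod μ)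
        = ENNReal.ofReal x₀ * ∫⁻ ω, ENNReal.ofReal (a T ω) ∂μ := by
    intro a b ha_ad ha_pos ha_int ha_mart hb_ad hb_pos hb_bud hm1 hm2
    have step1 : ∫⁻ p, ENNReal.ofReal (b p.1 p.2 / Y p.1 p.2 * a p.1 p.2) ∂(ν.prod μ)
        = ∫⁻ p, ENNReal.ofReal (b p.1 p.2 / Y p.1 p.2 * a T p.2) ∂(ν.prod μ) := by
      rw [lintegral_prod _ hm1, lintegral_prod _ hm2]
      refine lintegral_congr_ae ?_
      rw [hν]
      refine (ae_restrict_iff' measurableSet_Icc).2 (ae_of_all _ fun t ht => ?_)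
      exact (tower_aux (ℱ.le t) ha_int (ae_of_all _ fun ω => (ha_pos ω T hT0T).le)
        (ha_mart t ht) ((ha_ad t).mono (ℱ.le t) le_rfl).aemeasurable
        (ae_of_all _ fun ω => (ha_pos ω t ht).le)
        (((hb_ad t).div (hYadapted t)).stronglyMeasurable)
        (fun ω => (div_pos (hb_pos ω t ht) (hY_pos ω t ht)).le)).symm
    rw [step1, lintegral_prod_symm _ hm2]
    have step3 : ∀ᵐ ω ∂μ, ∫⁻ t, ENNReal.ofReal (b t ω / Y t ω * a T ω) ∂ν
        = ENNReal.ofReal x₀ * ENNReal.ofReal (a T ω) := by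
      filter_upwards [hb_bud] with ω hωb
      have hsplit : ∀ t, ENNReal.ofReal (b t ω / Y t ω * a T ω)
          = ENNReal.ofReal (b t ω / Y t ω) * ENNReal.ofReal (a T ω) :=
        fun t => ENNReal.ofReal_mul' (ha_pos ω T hT0T).le
      simp_rw [hsplit]
      rw [lintegral_mul_const' _ _ ENNReal.ofReal_ne_top, hωb, mul_comm]
    calc ∫⁻ ω, ∫⁻ t, ENNReal.ofReal (b t ω / Y t ω * a T ω) ∂ν ∂μ
        = ∫⁻ ω, ENNReal.ofReal x₀ * ENNReal.ofReal (a T ω) ∂μ := lintegral_congr_ae step3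
      _ = ENNReal.ofReal x₀ * ∫⁻ ω, ENNReal.ofReal (a T ω) ∂μ :=
          lintegral_const_mul' _ _ ENNReal.ofReal_ne_top

  -- four applications of the key identity
  have hbud_c : ∀ᵐ ω ∂μ, ∫⁻ t, ENNReal.ofReal (c t ω / Y t ω) ∂ν = ENNReal.ofReal x₀ :=
    hbudget c hc_cont hc_pos hc_budget (fun ω t ht => le_add_of_nonneg_right (hc'_pos ω t ht).le)
  have hbud_c' : ∀ᵐ ω ∂μ, ∫⁻ t, ENNReal.ofReal (c' t ω / Y t ω) ∂ν = ENNReal.ofReal x₀ :=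
    hbudget c' hc'_cont hc'_pos hc'_budget (fun ω t ht => le_add_of_nonneg_left (hc_pos ω t ht).le)
  have hmc : Measurable (c T) := (hc_adapted T).mono (ℱ.le T) le_rfl
  have hmc' : Measurable (c' T) := (hc'_adapted T).mono (ℱ.le T) le_rfl
  have hmart_c : ∀ t, t ∈ Icc (0:ℝ) T → μ[c T|ℱ t] =ᵐ[μ] c t :=
    fun t ht => hc_mart t T ht.1 ht.2 le_rfl
  have hmart_c' : ∀ t, t ∈ Icc (0:ℝ) T → μ[c' T|ℱ t] =ᵐ[μ] c' t :=
    fun t ht => hc'_mart t T ht.1 ht.2 le_rfl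
  have hm_cc : AEMeasurable
      (fun p : ℝ × Ω => ENNReal.ofReal (c p.1 p.2 / Y p.1 p.2 * c p.1 p.2)) (ν.prod μ) :=
    haemeas (fun t ω => c t ω / Y t ω * c t ω) ((hjc.div hjY).mul hjc)
  have hm_cc' : AEMeasurable
      (fun p : ℝ × Ω => ENNReal.ofReal (c p.1 p.2 / Y p.1 p.2 * c' p.1 p.2)) (ν.prod μ) :=
    haemeas (fun t ω => c t ω / Y t ω * c' t ω) ((hjc.div hjY).mul hjc')
  have hm_c'c : AEMeasurable
      (fun p : ℝ × Ω => ENNReal.ofReal (c' p.1 p.2 / Y p.1 p.2 * c p.1 p.2)) (ν.prod μ) :=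
    haemeas (fun t ω => c' t ω / Y t ω * c t ω) ((hjc'.div hjY).mul hjc)
  have hm_c'c' : AEMeasurable
      (fun p : ℝ × Ω => ENNReal.ofReal (c' p.1 p.2 / Y p.1 p.2 * c' p.1 p.2)) (ν.prod μ) :=
    haemeas (fun t ω => c' t ω / Y t ω * c' t ω) ((hjc'.div hjY).mul hjc')
  have hm_ccT : AEMeasurable
      (fun p : ℝ × Ω => ENNReal.ofReal (c p.1 p.2 / Y p.1 p.2 * c T p.2)) (ν.prod μ) :=
    haemeas (fun t ω => c t ω / Y t ω * c T ω) ((hjc.div hjY).mul (hmc.comp measurable_snd))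
  have hm_c'cT : AEMeasurable
      (fun p : ℝ × Ω => ENNReal.ofReal (c' p.1 p.2 / Y p.1 p.2 * c T p.2)) (ν.prod μ) :=
    haemeas (fun t ω => c' t ω / Y t ω * c T ω) ((hjc'.div hjY).mul (hmc.comp measurable_snd))
  have hm_cc'T : AEMeasurable
      (fun p : ℝ × Ω => ENNReal.ofReal (c p.1 p.2 / Y p.1 p.2 * c' T p.2)) (ν.prod μ) :=
    haemeas (fun t ω => c t ω / Y t ω * c' T ω) ((hjc.div hjY).mul (hmc'.comp measurable_snd))
  have hm_c'c'T : AEMeasurable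
      (fun p : ℝ × Ω => ENNReal.ofReal (c' p.1 p.2 / Y p.1 p.2 * c' T p.2)) (ν.prod μ) :=
    haemeas (fun t ω => c' t ω / Y t ω * c' T ω) ((hjc'.div hjY).mul (hmc'.comp measurable_snd))
  have I1 := key c c hc_adapted hc_pos (hc_int T hT0T) hmart_c hc_adapted hc_pos hbud_c
    hm_cc hm_ccT
  have I2 := key c c' hc_adapted hc_pos (hc_int T hT0T) hmart_c hc'_adapted hc'_pos hbud_c'
    hm_c'c hm_c'cT
  have I3 := key c' c hc'_adapted hc'_pos (hc'_int T hT0T) hmart_c' hc_adapted hc_pos hbud_c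
    hm_cc' hm_cc'T
  have I4 := key c' c' hc'_adapted hc'_pos (hc'_int T hT0T) hmart_c' hc'_adapted hc'_pos hbud_c'
    hm_c'c' hm_c'c'T
  -- the difference-squared integrand
  have hXm : AEMeasurable
      (fun p : ℝ × Ω => ENNReal.ofReal ((c p.1 p.2 - c' p.1 p.2)^2 / Y p.1 p.2)) (ν.prod μ) :=
    haemeas (fun t ω => (c t ω - c' t ω)^2 / Y t ω) (((hjc.sub hjc').pow_const 2).div hjY)
  have hpt : ∀ᵐ p ∂(ν.prod μ),
      ENNReal.ofReal ((c p.1 p.2 - c' p.1 p.2)^2 / Y p.1 p.2)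
        + (ENNReal.ofReal (c' p.1 p.2 / Y p.1 p.2 * c p.1 p.2)
          + ENNReal.ofReal (c p.1 p.2 / Y p.1 p.2 * c' p.1 p.2))
        = ENNReal.ofReal (c p.1 p.2 / Y p.1 p.2 * c p.1 p.2)
          + ENNReal.ofReal (c' p.1 p.2 / Y p.1 p.2 * c' p.1 p.2) := by
    filter_upwards [haeIcc] with p hp
    have hY1 := hY_pos p.2 p.1 hp
    have hc1 := hc_pos p.2 p.1 hp
    have hc1' := hc'_pos p.2 p.1 hp
    rw [← ENNReal.ofReal_add (by positivity) (by positivity),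
        ← ENNReal.ofReal_add (by positivity) (by positivity),
        ← ENNReal.ofReal_add (by positivity) (by positivity)]
    congr 1
    field_simp
    ring
  have hsum : (∫⁻ p, ENNReal.ofReal ((c p.1 p.2 - c' p.1 p.2)^2 / Y p.1 p.2) ∂(ν.prod μ))
      + ((∫⁻ p, ENNReal.ofReal (c' p.1 p.2 / Y p.1 p.2 * c p.1 p.2) ∂(ν.prod μ))
        + (∫⁻ p, ENNReal.ofReal (c p.1 p.2 / Y p.1 p.2 * c' p.1 p.2) ∂(ν.prod μ)))
      = (∫⁻ p, ENNReal.ofReal (c p.1 p.2 / Y p.1 p.2 * c p.1 p.2) ∂(ν.prod μ))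
        + (∫⁻ p, ENNReal.ofReal (c' p.1 p.2 / Y p.1 p.2 * c' p.1 p.2) ∂(ν.prod μ)) := by
    have h0 := lintegral_congr_ae hpt
    rwa [lintegral_add_left' hXm, lintegral_add_left' hm_c'c, lintegral_add_left' hm_cc] at h0
  have hKcfin : (∫⁻ ω, ENNReal.ofReal (c T ω) ∂μ) ≠ ⊤ := by
    have hle : (∫⁻ ω, ENNReal.ofReal (c T ω) ∂μ) ≤ ∫⁻ ω, (‖c T ω‖₊ : ENNReal) ∂μ :=
      lintegral_mono fun ω => by
        rw [← enorm_eq_nnnorm, Real.enorm_eq_ofReal_abs]; exact ENNReal.ofReal_le_ofReal (le_abs_self _)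
    exact (lt_of_le_of_lt hle (hc_int T hT0T).2).ne
  have hKc'fin : (∫⁻ ω, ENNReal.ofReal (c' T ω) ∂μ) ≠ ⊤ := by
    have hle : (∫⁻ ω, ENNReal.ofReal (c' T ω) ∂μ) ≤ ∫⁻ ω, (‖c' T ω‖₊ : ENNReal) ∂μ :=
      lintegral_mono fun ω => by
        rw [← enorm_eq_nnnorm, Real.enorm_eq_ofReal_abs]; exact ENNReal.ofReal_le_ofReal (le_abs_self _)
    exact (lt_of_le_of_lt hle (hc'_int T hT0T).2).ne
  have hXzero : (∫⁻ p, ENNReal.ofReal ((c p.1 p.2 - c' p.1 p.2)^2 / Y p.1 p.2) ∂(ν.prod μ)) = 0 := by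
    rw [I1, I2, I3, I4] at hsum
    have hvfin : ENNReal.ofReal x₀ * (∫⁻ ω, ENNReal.ofReal (c T ω) ∂μ)
        + ENNReal.ofReal x₀ * (∫⁻ ω, ENNReal.ofReal (c' T ω) ∂μ) ≠ ⊤ :=
      ENNReal.add_ne_top.2 ⟨ENNReal.mul_ne_top ENNReal.ofReal_ne_top hKcfin,
        ENNReal.mul_ne_top ENNReal.ofReal_ne_top hKc'fin⟩
    have h0 : (∫⁻ p, ENNReal.ofReal ((c p.1 p.2 - c' p.1 p.2)^2 / Y p.1 p.2) ∂(ν.prod μ))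
        + (ENNReal.ofReal x₀ * (∫⁻ ω, ENNReal.ofReal (c T ω) ∂μ)
          + ENNReal.ofReal x₀ * (∫⁻ ω, ENNReal.ofReal (c' T ω) ∂μ))
        = 0 + (ENNReal.ofReal x₀ * (∫⁻ ω, ENNReal.ofReal (c T ω) ∂μ)
          + ENNReal.ofReal x₀ * (∫⁻ ω, ENNReal.ofReal (c' T ω) ∂μ)) := by
      rw [zero_add]; exact hsum
    exact (ENNReal.add_left_inj hvfin).1 h0
  -- extract a.e. statement
  rw [lintegral_prod_symm _ hXm] at hXzero
  have hinner_meas : Measurable (fun ω =>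
      ∫⁻ t, ENNReal.ofReal ((c (π₀ t) ω - c' (π₀ t) ω)^2 / Y (π₀ t) ω) ∂ν) := by
    have hD : Measurable (fun p : Ω × ℝ =>
        ENNReal.ofReal ((c (π₀ p.2) p.1 - c' (π₀ p.2) p.1)^2 / Y (π₀ p.2) p.1)) :=
      (ENNReal.measurable_ofReal.comp (((hjc.sub hjc').pow_const 2).div hjY)).comp measurable_swap
    exact Measurable.lintegral_prod_right (f := fun ω t =>
      ENNReal.ofReal ((c (π₀ t) ω - c' (π₀ t) ω)^2 / Y (π₀ t) ω)) hD
  have hfuneq : (fun ω => ∫⁻ t, ENNReal.ofReal ((c t ω - c' t ω)^2 / Y t ω) ∂ν)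
      = fun ω => ∫⁻ t, ENNReal.ofReal ((c (π₀ t) ω - c' (π₀ t) ω)^2 / Y (π₀ t) ω) ∂ν := by
    funext ω
    rw [hν]
    refine setLIntegral_congr_fun measurableSet_Icc (fun t ht => ?_)
    rw [hπ₀id t ht]
  have hae1 : ∀ᵐ ω ∂μ, (∫⁻ t, ENNReal.ofReal ((c t ω - c' t ω)^2 / Y t ω) ∂ν) = 0 := by
    have hXaem : AEMeasurable (fun ω => ∫⁻ t, ENNReal.ofReal ((c t ω - c' t ω)^2 / Y t ω) ∂ν) μ := by
      rw [hfuneq]; exact hinner_meas.aemeasurable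
    exact (lintegral_eq_zero_iff' hXaem).1 hXzero
  filter_upwards [hae1] with ω hω
  have haet : ∀ᵐ t ∂ν, c t ω = c' t ω := by
    have hm : AEMeasurable (fun t => ENNReal.ofReal ((c t ω - c' t ω)^2 / Y t ω)) ν := by
      have hcontD : ContinuousOn (fun t => (c t ω - c' t ω)^2 / Y t ω) (Icc 0 T) :=
        (((hc_cont ω).sub (hc'_cont ω)).pow 2).div (hY_cont ω) (fun t ht => (hY_pos ω t ht).ne')
      rw [hν]
      exact ENNReal.measurable_ofReal.comp_aemeasurable (hcontD.aemeasurable measurableSet_Icc)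
    have h0 := (lintegral_eq_zero_iff' hm).1 hω
    rw [hν] at h0 ⊢
    filter_upwards [h0, ae_restrict_mem measurableSet_Icc] with t h0t hmem
    have h2 : (c t ω - c' t ω)^2 / Y t ω ≤ 0 := by
      have := h0t
      simpa [ENNReal.ofReal_eq_zero] using this
    by_contra hne
    have h3 : 0 < (c t ω - c' t ω)^2 / Y t ω :=
      div_pos (pow_two_pos_of_ne_zero (sub_ne_zero.2 hne)) (hY_pos ω t hmem)
    linarith
  exact eqOn_Icc_of_ae_eq hT (hc_cont ω) (hc'_cont ω) (by rw [hν] at haet; exact haet)
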